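/- Suppose J : ℝ₊ → ℝ₊ is measurable and there exist constants C₁, C₂ > 0 and R₀ ≥ 1 with C₁ r^{-β} ≤ J(r) ≤ C₂ r^{-β} for all r ≥ R₀, where N < β ≤ N + 1. Then J_*(ρ) ≍ ρ^{N-β-1} for ρ large; i.e., there exist c₁, c₂ > 0 and ρ₀ such that c₁ ρ^{N-β-1} ≤ J_*(ρ) ≤ c₂ ρ^{N-β-1} for all ρ ≥ ρ₀. -/
import Mathlib


open MeasureTheory

/-- Surface area of the unit sphere in `ℝ^k`, i.e. `k` times the volume of the unit ball. -/
noncomputable def unitSphereArea (k : ℕ) : ℝ :=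
  (k : ℝ) * (volume (Metric.ball (0 : EuclideanSpace ℝ (Fin k)) 1)).toReal

section Helpers13
open MeasureTheory Set Real

-- the model integrand on (1,∞)
lemma aux_meas (α γ : ℝ) : Measurable (fun ξ : ℝ => (ξ^2 - 1)^α * ξ^γ) := by
  fun_prop

lemma aux_int (α β : ℝ) (hα : -1 < α) (hβ1 : 1 ≤ β) (hβ : 2*α + 2 < β) :
    IntegrableOn (fun ξ : ℝ => (ξ^2 - 1)^α * ξ^(1-β)) (Set.Ioi 1) := by
  have hmeas := aux_meas α (1-β)
  have hunion : Set.Ioc (1:ℝ) 2 ∪ Set.Ioi 2 = Set.Ioi 1 := Set.Ioc_union_Ioi_eq_Ioi one_le_two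
  rw [← hunion]
  apply IntegrableOn.union
  · -- near 1: bound by (3^α+1) * (ξ-1)^α
    have hb : IntegrableOn (fun ξ : ℝ => (3:ℝ)^α * (ξ - 1) ^ α + (ξ-1)^α) (Set.Ioc 1 2) := by
      have h1 : IntegrableOn (fun ξ : ℝ => (ξ - 1) ^ α) (Set.Ioc 1 2) := by
        rw [← intervalIntegrable_iff_integrableOn_Ioc_of_le one_le_two]
        have := (intervalIntegral.intervalIntegrable_rpow' (a := 0) (b := 1) hα).comp_sub_right 1
        norm_num at this
        exact this
      exact (h1.const_mul _).add h1
    refine Integrable.mono' hb hmeas.aestronglyMeasurable ?_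
    rw [ae_restrict_iff' measurableSet_Ioc]
    refine ae_of_all _ fun ξ hξ => ?_
    obtain ⟨h1, h2⟩ := hξ
    have hξ0 : (0:ℝ) < ξ := by linarith
    have hsq : (0:ℝ) ≤ ξ^2 - 1 := by nlinarith
    have hfac : ξ^2 - 1 = (ξ - 1) * (ξ + 1) := by ring
    have hnn : (0:ℝ) ≤ (ξ^2-1)^α * ξ^(1-β) :=
      mul_nonneg (rpow_nonneg hsq _) (rpow_nonneg hξ0.le _)
    rw [norm_of_nonneg hnn]
    have hle1 : ξ^(1-β) ≤ 1 := rpow_le_one_of_one_le_of_nonpos h1.le (by linarith)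
    have step1 : (ξ^2-1)^α * ξ^(1-β) ≤ (ξ^2-1)^α :=
      (mul_le_of_le_one_right (rpow_nonneg hsq _) hle1)
    refine step1.trans ?_
    rw [hfac, Real.mul_rpow (by linarith) (by linarith)]
    have hplus : (ξ+1)^α ≤ 3^α + 1 := by
      rcases le_or_gt 0 α with h | h
      · have : (ξ+1)^α ≤ 3^α := Real.rpow_le_rpow (by linarith) (by linarith) h
        linarith [this]
      · have h2' : (ξ+1)^α ≤ 1^α := Real.rpow_le_rpow_of_nonpos one_pos (by linarith) h.le
        rw [Real.one_rpow] at h2'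
        have : (0:ℝ) < 3^α := Real.rpow_pos_of_pos (by norm_num) _
        linarith
    calc (ξ-1)^α * (ξ+1)^α ≤ (ξ-1)^α * (3^α + 1) :=
          mul_le_mul_of_nonneg_left hplus (rpow_nonneg (by linarith) _)
      _ = 3^α * (ξ-1)^α + (ξ-1)^α := by ring
  · -- far away: bound by ((3/4)^α + 1) * ξ^(2α+1-β)
    have hb : IntegrableOn (fun ξ : ℝ => ((3/4:ℝ)^α + 1) * ξ^(2*α+1-β)) (Set.Ioi 2) :=
      (integrableOn_Ioi_rpow_of_lt (by linarith) (by norm_num)).const_mul _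
    refine Integrable.mono' hb hmeas.aestronglyMeasurable ?_
    rw [ae_restrict_iff' measurableSet_Ioi]
    refine ae_of_all _ fun ξ hξ => ?_
    have h2 : (2:ℝ) < ξ := hξ
    have hξ0 : (0:ℝ) < ξ := by linarith
    have hsq : (0:ℝ) ≤ ξ^2 - 1 := by nlinarith
    have hnn : (0:ℝ) ≤ (ξ^2-1)^α * ξ^(1-β) :=
      mul_nonneg (rpow_nonneg hsq _) (rpow_nonneg hξ0.le _)
    rw [norm_of_nonneg hnn]
    have hpow2 : (ξ^2:ℝ)^α = ξ^(2*α) := by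
      rw [← Real.rpow_natCast ξ 2, ← Real.rpow_mul hξ0.le]
      norm_num
    have key : (ξ^2-1)^α ≤ ((3/4:ℝ)^α + 1) * ξ^(2*α) := by
      rcases le_or_gt 0 α with h | h
      · have h1 : (ξ^2-1)^α ≤ (ξ^2)^α := Real.rpow_le_rpow hsq (by nlinarith) h
        rw [hpow2] at h1
        have : (0:ℝ) ≤ ξ^(2*α) := rpow_nonneg hξ0.le _
        have h34 : (0:ℝ) < (3/4:ℝ)^α := Real.rpow_pos_of_pos (by norm_num) _
        nlinarith
      · have h34 : (0:ℝ) < (3/4:ℝ) * ξ^2 := by nlinarith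
        have h1 : (ξ^2-1)^α ≤ ((3/4:ℝ) * ξ^2)^α :=
          Real.rpow_le_rpow_of_nonpos h34 (by nlinarith) h.le
        rw [Real.mul_rpow (by norm_num) (by positivity), hpow2] at h1
        have : (0:ℝ) ≤ ξ^(2*α) := rpow_nonneg hξ0.le _
        nlinarith
    calc (ξ^2-1)^α * ξ^(1-β) ≤ (((3/4:ℝ)^α + 1) * ξ^(2*α)) * ξ^(1-β) :=
          mul_le_mul_of_nonneg_right key (rpow_nonneg hξ0.le _)
      _ = ((3/4:ℝ)^α + 1) * ξ^(2*α+1-β) := by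
          rw [mul_assoc, ← Real.rpow_add hξ0]; ring_nf

lemma aux_pos (α β : ℝ) (hα : -1 < α) (hβ1 : 1 ≤ β) (hβ : 2*α + 2 < β) :
    0 < ∫ ξ in Set.Ioi (1:ℝ), (ξ^2 - 1)^α * ξ^(1-β) := by
  have hnn : (0:ℝ → ℝ) ≤ᵐ[volume.restrict (Set.Ioi 1)] fun ξ : ℝ => (ξ^2 - 1)^α * ξ^(1-β) := by
    refine (ae_restrict_iff' measurableSet_Ioi).mpr (ae_of_all _ fun ξ hξ => ?_)
    have h1 : (1:ℝ) < ξ := hξ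
    exact mul_nonneg (Real.rpow_nonneg (by nlinarith) _) (Real.rpow_nonneg (by linarith) _)
  rw [setIntegral_pos_iff_support_of_nonneg_ae hnn (aux_int α β hα hβ1 hβ)]
  have hsub : Set.Ioi (1:ℝ) ⊆ Function.support (fun ξ : ℝ => (ξ^2 - 1)^α * ξ^(1-β)) ∩ Set.Ioi 1 := by
    intro ξ hξ
    have h1 : (1:ℝ) < ξ := hξ
    refine ⟨?_, hξ⟩
    have : (0:ℝ) < (ξ^2-1)^α * ξ^(1-β) :=
      mul_pos (Real.rpow_pos_of_pos (by nlinarith) _) (Real.rpow_pos_of_pos (by linarith) _)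
    exact ne_of_gt this
  refine lt_of_lt_of_le ?_ (measure_mono hsub)
  simp [Real.volume_Ioi]

lemma aux_ptwise (α β ρ : ℝ) (hρ : 0 < ρ) : ∀ x ∈ Set.Ioi (1:ℝ),
    ((ρ*x)^2 - ρ^2)^α * (ρ*x)^(1-β) = ρ^(2*α+1-β) * ((x^2-1)^α * x^(1-β)) := by
  intro x hx
  have hx1 : (1:ℝ) < x := hx
  have hx0 : (0:ℝ) < x := by linarith
  have e1 : (ρ*x)^2 - ρ^2 = ρ^2 * (x^2-1) := by ring
  have e2 : (ρ^2:ℝ)^α = ρ^(2*α) := by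
    rw [← Real.rpow_natCast ρ 2, ← Real.rpow_mul hρ.le]; norm_num
  rw [e1, Real.mul_rpow (sq_nonneg ρ) (by nlinarith), Real.mul_rpow hρ.le hx0.le, e2]
  rw [show ρ^(2*α) * (x^2-1)^α * (ρ^(1-β) * x^(1-β))
      = (ρ^(2*α) * ρ^(1-β)) * ((x^2-1)^α * x^(1-β)) from by ring, ← Real.rpow_add hρ]
  ring_nf

lemma aux_int_scaled (α β ρ : ℝ) (hα : -1 < α) (hβ1 : 1 ≤ β) (hβ : 2*α + 2 < β) (hρ : 0 < ρ) :
    IntegrableOn (fun r : ℝ => (r^2 - ρ^2)^α * r^(1-β)) (Set.Ioi ρ) := by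
  have h := integrableOn_Ioi_comp_mul_left_iff (fun r : ℝ => (r^2 - ρ^2)^α * r^(1-β)) 1 hρ
  rw [mul_one] at h
  rw [← h]
  exact MeasureTheory.IntegrableOn.congr_fun ((aux_int α β hα hβ1 hβ).const_mul (ρ^(2*α+1-β)))
    (fun x hx => (aux_ptwise α β ρ hρ x hx).symm) measurableSet_Ioi

lemma aux_subst (α β ρ : ℝ) (hρ : 0 < ρ) :
    ∫ r in Set.Ioi ρ, (r^2 - ρ^2)^α * r^(1-β)
      = ρ^(2*α+2-β) * ∫ ξ in Set.Ioi (1:ℝ), (ξ^2-1)^α * ξ^(1-β) := by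
  have key := integral_comp_mul_left_Ioi (fun r : ℝ => (r^2 - ρ^2)^α * r^(1-β)) 1 hρ
  rw [mul_one, smul_eq_mul] at key
  have left : (∫ x in Set.Ioi (1:ℝ), ((ρ*x)^2 - ρ^2)^α * (ρ*x)^(1-β))
      = ρ^(2*α+1-β) * ∫ ξ in Set.Ioi (1:ℝ), (ξ^2-1)^α * ξ^(1-β) := by
    rw [setIntegral_congr_fun measurableSet_Ioi (aux_ptwise α β ρ hρ)]
    exact MeasureTheory.integral_const_mul _ _
  beta_reduce at key
  rw [left] at key
  have : (∫ r in Set.Ioi ρ, (r^2 - ρ^2)^α * r^(1-β))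
      = ρ * (ρ^(2*α+1-β) * ∫ ξ in Set.Ioi (1:ℝ), (ξ^2-1)^α * ξ^(1-β)) := by
    rw [key, ← mul_assoc, mul_inv_cancel₀ hρ.ne', one_mul]
  rw [this, ← mul_assoc]
  congr 1
  rw [show ρ * ρ^(2*α+1-β) = ρ^(1:ℝ) * ρ^(2*α+1-β) from by rw [Real.rpow_one],
    ← Real.rpow_add hρ]
  ring_nf

end Helpers13

/-- If `C₁ r^{-β} ≤ J(r) ≤ C₂ r^{-β}` for large `r`, with `N < β ≤ N+1`, then
`J_*(ρ) ≍ ρ^{N-β-1}` for `ρ` large. -/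
theorem stmt13 (N : ℕ) (hN : 2 ≤ N) (J : ℝ → ℝ) (hJm : Measurable J)
    (hJnn : ∀ r, 0 ≤ J r)
    (C₁ C₂ R₀ β : ℝ) (hC₁ : 0 < C₁) (hC₂ : 0 < C₂) (hR₀ : 1 ≤ R₀)
    (hβl : (N:ℝ) < β) (hβu : β ≤ (N:ℝ) + 1)
    (hbb : ∀ r : ℝ, R₀ ≤ r → C₁ * r ^ (-β) ≤ J r ∧ J r ≤ C₂ * r ^ (-β))
    (hintJ : IntegrableOn (fun r => J r * r ^ (N - 1)) (Set.Ioi 0))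
    (Jstar : ℝ → ℝ)
    (hJs : ∀ ρ : ℝ, 0 < ρ → Jstar ρ =
      unitSphereArea (N - 1) *
        ∫ r in Set.Ioi ρ, (r ^ 2 - ρ ^ 2) ^ (((N:ℝ) - 3) / 2) * r * J r) :
    ∃ c₁ > (0:ℝ), ∃ c₂ > (0:ℝ), ∃ ρ₀ > (0:ℝ), ∀ ρ : ℝ, ρ₀ ≤ ρ →
      c₁ * ρ ^ ((N:ℝ) - β - 1) ≤ Jstar ρ ∧ Jstar ρ ≤ c₂ * ρ ^ ((N:ℝ) - β - 1) := by
  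
  have hN2 : (2:ℝ) ≤ (N:ℝ) := by exact_mod_cast hN
  set α : ℝ := ((N:ℝ) - 3) / 2 with hαdef
  have hα : -1 < α := by rw [hαdef]; linarith
  have hβ1 : 1 ≤ β := by linarith
  have hβ2 : 2*α + 2 < β := by rw [hαdef]; linarith [hβl]
  set I : ℝ := ∫ ξ in Set.Ioi (1:ℝ), (ξ^2-1)^α * ξ^(1-β) with hIdef
  have hI : 0 < I := aux_pos α β hα hβ1 hβ2
  set ω : ℝ := unitSphereArea (N - 1) with hωdef
  have hω : 0 < ω := by
    rw [hωdef]
    unfold unitSphereArea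
    apply mul_pos
    · have : 1 ≤ N - 1 := by omega
      exact_mod_cast Nat.pos_of_ne_zero (by omega)
    · exact ENNReal.toReal_pos (Metric.measure_ball_pos volume _ one_pos).ne'
        measure_ball_lt_top.ne
  have hexp : 2*α + 2 - β = (N:ℝ) - β - 1 := by rw [hαdef]; ring
  refine ⟨ω * C₁ * I, by positivity, ω * C₂ * I, by positivity, R₀, by linarith,
    fun ρ hρ => ?_⟩
  have hρ0 : (0:ℝ) < ρ := by linarith
  have hg_int : IntegrableOn (fun r : ℝ => (r^2 - ρ^2)^α * r^(1-β)) (Set.Ioi ρ) :=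
    aux_int_scaled α β ρ hα hβ1 hβ2 hρ0
  have hg_val : (∫ r in Set.Ioi ρ, (r^2 - ρ^2)^α * r^(1-β)) = ρ^((N:ℝ) - β - 1) * I := by
    rw [aux_subst α β ρ hρ0, hexp]
  -- pointwise bounds
  have hub : ∀ r ∈ Set.Ioi ρ, (r^2 - ρ^2)^α * r * J r ≤ C₂ * ((r^2 - ρ^2)^α * r^(1-β)) := by
    intro r hr
    have hrρ : ρ < r := hr
    have hr0 : (0:ℝ) < r := by linarith
    have hrR : R₀ ≤ r := by linarith
    have hsq : (0:ℝ) ≤ r^2 - ρ^2 := by nlinarith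
    have h1β : r^(1-β) = r * r^(-β) := by
      rw [show (1-β) = 1 + (-β) from by ring, Real.rpow_add hr0, Real.rpow_one]
    have := (hbb r hrR).2
    calc (r^2 - ρ^2)^α * r * J r ≤ (r^2 - ρ^2)^α * r * (C₂ * r^(-β)) := by
          apply mul_le_mul_of_nonneg_left this
          exact mul_nonneg (Real.rpow_nonneg hsq _) hr0.le
      _ = C₂ * ((r^2 - ρ^2)^α * r^(1-β)) := by rw [h1β]; ring
  have hlb : ∀ r ∈ Set.Ioi ρ, C₁ * ((r^2 - ρ^2)^α * r^(1-β)) ≤ (r^2 - ρ^2)^α * r * J r := by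
    intro r hr
    have hrρ : ρ < r := hr
    have hr0 : (0:ℝ) < r := by linarith
    have hrR : R₀ ≤ r := by linarith
    have hsq : (0:ℝ) ≤ r^2 - ρ^2 := by nlinarith
    have h1β : r^(1-β) = r * r^(-β) := by
      rw [show (1-β) = 1 + (-β) from by ring, Real.rpow_add hr0, Real.rpow_one]
    have := (hbb r hrR).1
    calc C₁ * ((r^2 - ρ^2)^α * r^(1-β)) = (r^2 - ρ^2)^α * r * (C₁ * r^(-β)) := by
          rw [h1β]; ring
      _ ≤ (r^2 - ρ^2)^α * r * J r := by
          apply mul_le_mul_of_nonneg_left this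
          exact mul_nonneg (Real.rpow_nonneg hsq _) hr0.le
  -- integrability of the actual integrand
  have hF_meas : Measurable (fun r : ℝ => (r^2 - ρ^2)^α * r * J r) := by fun_prop
  have hF_int : IntegrableOn (fun r : ℝ => (r^2 - ρ^2)^α * r * J r) (Set.Ioi ρ) := by
    refine Integrable.mono' (hg_int.const_mul C₂) hF_meas.aestronglyMeasurable ?_
    rw [ae_restrict_iff' measurableSet_Ioi]
    refine ae_of_all _ fun r hr => ?_
    have hrρ : ρ < r := hr
    have hr0 : (0:ℝ) < r := by linarith
    have hsq : (0:ℝ) ≤ r^2 - ρ^2 := by nlinarith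
    have hnn : (0:ℝ) ≤ (r^2 - ρ^2)^α * r * J r :=
      mul_nonneg (mul_nonneg (Real.rpow_nonneg hsq _) hr0.le) (hJnn r)
    rw [Real.norm_of_nonneg hnn]
    exact hub r hr
  have hmono1 : (∫ r in Set.Ioi ρ, (r^2 - ρ^2)^α * r * J r)
      ≤ C₂ * (ρ^((N:ℝ) - β - 1) * I) := by
    rw [← hg_val, ← MeasureTheory.integral_const_mul]
    exact setIntegral_mono_on hF_int (hg_int.const_mul C₂) measurableSet_Ioi hub
  have hmono2 : C₁ * (ρ^((N:ℝ) - β - 1) * I)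
      ≤ ∫ r in Set.Ioi ρ, (r^2 - ρ^2)^α * r * J r := by
    rw [← hg_val, ← MeasureTheory.integral_const_mul]
    exact setIntegral_mono_on (hg_int.const_mul C₁) hF_int measurableSet_Ioi hlb
  rw [hJs ρ hρ0]
  constructor
  · calc ω * C₁ * I * ρ ^ ((N:ℝ) - β - 1) = ω * (C₁ * (ρ^((N:ℝ) - β - 1) * I)) := by ring
      _ ≤ ω * ∫ r in Set.Ioi ρ, (r ^ 2 - ρ ^ 2) ^ α * r * J r :=
          mul_le_mul_of_nonneg_left hmono2 hω.le
  · calc ω * ∫ r in Set.Ioi ρ, (r ^ 2 - ρ ^ 2) ^ α * r * J r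
        ≤ ω * (C₂ * (ρ^((N:ℝ) - β - 1) * I)) := mul_le_mul_of_nonneg_left hmono1 hω.le
      _ = ω * C₂ * I * ρ ^ ((N:ℝ) - β - 1) := by ring
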